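/- The sum over nonnegative integers n of 1/C(2n,n) equals (2/27)·(18 + √3·π), where C(2n,n) is the central binomial coefficient. -/

import Mathlib

open Nat

open Complex intervalIntegral in
lemma prod_aux (m k : ℕ) : (∏ j ∈ Finset.range k, (m + 1 + j)) * m ! = (m + k)! := by
  induction k with
  | zero => simp
  | succ k ih =>
    rw [Finset.prod_range_succ, mul_right_comm, ih]
    rw [← Nat.add_assoc, Nat.factorial_succ, Nat.add_right_comm]
    ring

lemma beta_nat (n : ℕ) :
    ∫ x in (0:ℝ)..1, (x * (1 - x)) ^ n = (n ! * n ! : ℝ) / (2 * n + 1)! := by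
  have h := Complex.betaIntegral_eval_nat_add_one_right
    (u := (n : ℂ) + 1) (by simp; positivity) n
  have h2 : Complex.betaIntegral ((n : ℂ) + 1) ((n : ℂ) + 1) =
      ((∫ x in (0:ℝ)..1, (x * (1 - x)) ^ n : ℝ) : ℂ) := by
    rw [Complex.betaIntegral, ← intervalIntegral.integral_ofReal]
    apply intervalIntegral.integral_congr
    intro x hx
    simp only [add_sub_cancel_right]
    rw [show ((1:ℂ) - x) = ((1 - x : ℝ) : ℂ) by push_cast; ring]
    rw [Complex.cpow_natCast, Complex.cpow_natCast]
    rw [← mul_pow]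
    push_cast
    ring_nf
  rw [h2] at h
  have hp : (∏ j ∈ Finset.range (n + 1), ((n:ℂ) + 1 + (j : ℕ))) =
      (((2 * n + 1)! : ℕ) : ℂ) / ((n ! : ℕ) : ℂ) := by
    have := prod_aux n (n + 1)
    have hcast : ((∏ j ∈ Finset.range (n+1), (n + 1 + j) : ℕ) : ℂ) * ((n ! : ℕ) : ℂ)
        = (((n + (n+1))! : ℕ) : ℂ) := by exact_mod_cast congrArg (Nat.cast : ℕ → ℂ) this
    rw [eq_div_iff (by exact_mod_cast n.factorial_ne_zero)]
    rw [show (2 * n + 1) = n + (n + 1) by ring, ← hcast]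
    push_cast
    ring
  rw [hp, div_div_eq_mul_div] at h
  apply Complex.ofReal_injective
  rw [h]
  push_cast
  ring

lemma int_eq (n : ℕ) :
    ∫ x in (0:ℝ)..1, ((2 * n + 1 : ℝ) * (x * (1 - x)) ^ n)
      = 1 / (Nat.choose (2 * n) n : ℝ) := by
  rw [intervalIntegral.integral_const_mul, beta_nat]
  have hc : (Nat.choose (2 * n) n : ℝ) * (n ! * n !) = (2 * n)! := by
    have := Nat.choose_mul_factorial_mul_factorial (show n ≤ 2 * n by omega)
    rw [show 2 * n - n = n by omega] at this
    exact_mod_cast congrArg (Nat.cast : ℕ → ℝ) (by rw [← this]; ring)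
  have hf : ((2 * n + 1)! : ℝ) = (2 * n + 1) * (2 * n)! := by
    exact_mod_cast congrArg (Nat.cast : ℕ → ℝ) (Nat.factorial_succ (2 * n))
  have h1 : (0:ℝ) < (2*n)! := by positivity
  have h2 : (0:ℝ) < Nat.choose (2 * n) n := by
    exact_mod_cast Nat.choose_pos (show n ≤ 2 * n by omega)
  rw [hf]
  field_simp
  nlinarith [hc]

lemma summable_inv_choose : Summable (fun n : ℕ => (1:ℝ) / (Nat.choose (2 * n) n : ℝ)) := by
  apply summable_of_ratio_norm_eventually_le (r := 1/2) (by norm_num)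
  filter_upwards with n
  have h := Nat.succ_mul_centralBinom_succ n
  have hc : ∀ m : ℕ, (0:ℝ) < Nat.choose (2 * m) m := fun m =>
    by exact_mod_cast Nat.choose_pos (show m ≤ 2 * m by omega)
  have hcast : ((n:ℝ) + 1) * (Nat.choose (2 * (n+1)) (n+1) : ℝ)
      = 2 * (2 * n + 1) * (Nat.choose (2 * n) n : ℝ) := by
    exact_mod_cast congrArg (Nat.cast : ℕ → ℝ) h
  rw [Real.norm_of_nonneg (by positivity), Real.norm_of_nonneg (by positivity)]
  rw [show (1:ℝ)/2 * (1 / (Nat.choose (2 * n) n : ℝ)) = 1/(2 * (Nat.choose (2 * n) n : ℝ)) by ring,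
    div_le_div_iff₀ (hc (n+1)) (by have := hc n; positivity)]
  have hn : (0:ℝ) ≤ (n:ℝ) := by positivity
  nlinarith [hc n, hc (n+1), hcast, hn]

lemma tsum_odd_geom {t : ℝ} (ht : |t| < 1) :
    ∑' n : ℕ, (2 * (n:ℝ) + 1) * t ^ n = 2 / (1 - t) ^ 2 - 1 / (1 - t) := by
  have ht' : ‖t‖ < 1 := by rwa [Real.norm_eq_abs]
  have h1 : HasSum (fun n : ℕ => (n:ℝ) * t ^ n) (t / (1 - t) ^ 2) :=
    hasSum_coe_mul_geometric_of_norm_lt_one ht'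
  have h2 : HasSum (fun n : ℕ => t ^ n) (1 - t)⁻¹ := hasSum_geometric_of_norm_lt_one ht'
  have h3 := (h1.mul_left 2).add h2
  have ht0 : (1:ℝ) - t ≠ 0 := by
    intro h; rw [sub_eq_zero] at h; rw [← h] at ht; simp at ht
  rw [show (fun n : ℕ => (2 * (n:ℝ) + 1) * t ^ n)
      = fun n : ℕ => 2 * ((n:ℝ) * t ^ n) + t ^ n from funext fun n => by ring]
  rw [h3.tsum_eq]
  field_simp
  ring

lemma hq_pos (x : ℝ) : 0 < x ^ 2 - x + 1 := by nlinarith [sq_nonneg (x - 1/2)]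

lemma swap_lemma :
    ∑' n : ℕ, (1:ℝ) / (Nat.choose (2 * n) n : ℝ)
      = ∫ x in (0:ℝ)..1, (2 / (1 - x * (1 - x)) ^ 2 - 1 / (1 - x * (1 - x))) := by
  set μ := MeasureTheory.volume.restrict (Set.Ioc (0:ℝ) 1) with hμ
  set F : ℕ → ℝ → ℝ := fun n x => (2 * n + 1 : ℝ) * (x * (1 - x)) ^ n with hF
  have hcont : ∀ n, Continuous (F n) := by
    intro n; apply Continuous.mul continuous_const
    exact (continuous_id.mul (continuous_const.sub continuous_id)).pow n
  have hInt : ∀ n, MeasureTheory.Integrable (F n) μ := fun n => (hcont n).integrableOn_Ioc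
  have hval : ∀ n, ∫ x, F n x ∂μ = 1 / (Nat.choose (2 * n) n : ℝ) := by
    intro n
    rw [← int_eq n, intervalIntegral.integral_of_le (by norm_num)]
  have hnormval : ∀ n, ∫ x, ‖F n x‖ ∂μ = 1 / (Nat.choose (2 * n) n : ℝ) := by
    intro n
    rw [← hval n]
    apply MeasureTheory.setIntegral_congr_fun measurableSet_Ioc
    intro x hx
    simp only [Set.mem_Ioc] at hx
    simp only []
    rw [Real.norm_of_nonneg]
    apply mul_nonneg (by positivity)
    apply pow_nonneg
    nlinarith [hx.1, hx.2]
  have hsum : Summable fun n => ∫ x, ‖F n x‖ ∂μ := by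
    simp_rw [hnormval]; exact summable_inv_choose
  have hswap := MeasureTheory.integral_tsum_of_summable_integral_norm hInt hsum
  simp_rw [hval] at hswap
  rw [hswap, intervalIntegral.integral_of_le (by norm_num : (0:ℝ) ≤ 1)]
  apply MeasureTheory.setIntegral_congr_fun measurableSet_Ioc
  intro x hx
  simp only [Set.mem_Ioc] at hx
  have ht : |x * (1 - x)| < 1 := by
    rw [abs_lt]; constructor <;> nlinarith [hx.1, hx.2, sq_nonneg (x - 1/2)]
  exact tsum_odd_geom ht

lemma arctan_sqrt3 : Real.arctan (1 / Real.sqrt 3) = Real.pi / 6 := by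
  rw [← Real.tan_pi_div_six, Real.arctan_tan] <;> nlinarith [Real.pi_pos]

lemma ftc_lemma :
    (∫ x in (0:ℝ)..1, (2 / (1 - x * (1 - x)) ^ 2 - 1 / (1 - x * (1 - x))))
      = (2 / 27) * (18 + Real.sqrt 3 * Real.pi) := by
  have hs3 : (0:ℝ) < Real.sqrt 3 := Real.sqrt_pos.mpr (by norm_num)
  have hs3' : Real.sqrt 3 ^ 2 = 3 := Real.sq_sqrt (by norm_num)
  set F : ℝ → ℝ := fun x => (4 * x - 2) / (3 * (x ^ 2 - x + 1))
    + (2 * Real.sqrt 3 / 9) * Real.arctan ((2 * x - 1) / Real.sqrt 3) with hFdef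
  have hderiv : ∀ x : ℝ, HasDerivAt F
      (2 / (1 - x * (1 - x)) ^ 2 - 1 / (1 - x * (1 - x))) x := by
    intro x
    have hq := hq_pos x
    have h1 : HasDerivAt (fun x : ℝ => (4 * x - 2) / (3 * (x ^ 2 - x + 1)))
        ((4 * (3 * (x ^ 2 - x + 1)) - (4 * x - 2) * (3 * (2 * x - 1)))
          / (3 * (x ^ 2 - x + 1)) ^ 2) x := by
      apply HasDerivAt.div
      · simpa using ((hasDerivAt_id x).const_mul 4).sub_const 2
      · have : HasDerivAt (fun x : ℝ => x ^ 2 - x + 1) (2 * x - 1) x := by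
          simpa using ((hasDerivAt_pow 2 x).sub (hasDerivAt_id x)).add_const 1
        simpa [mul_comm] using this.const_mul 3
      · positivity
    have h2 : HasDerivAt (fun x : ℝ => (2 * x - 1) / Real.sqrt 3) (2 / Real.sqrt 3) x := by
      simpa using (((hasDerivAt_id x).const_mul 2).sub_const 1).div_const (Real.sqrt 3)
    have h3 := (h2.arctan).const_mul (2 * Real.sqrt 3 / 9)
    have h4 := h1.add h3
    refine h4.congr_deriv (Eq.symm ?_)
    have h5 : 1 - x * (1 - x) = x ^ 2 - x + 1 := by ring
    rw [h5]
    have h6 : (1 + ((2 * x - 1) / Real.sqrt 3) ^ 2) = (3 + (2 * x - 1) ^ 2) / 3 := by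
      rw [div_pow, hs3']; ring
    rw [h6]
    have h7 : (3:ℝ) + (2 * x - 1) ^ 2 = 4 * (x ^ 2 - x + 1) := by ring
    rw [h7]
    have := hs3.ne'
    have := hq.ne'
    field_simp
    ring
  have hcont : ContinuousOn (fun x : ℝ => 2 / (1 - x * (1 - x)) ^ 2 - 1 / (1 - x * (1 - x)))
      (Set.uIcc (0:ℝ) 1) := by
    apply ContinuousOn.sub
    · apply ContinuousOn.div continuousOn_const (by fun_prop)
      intro x _
      have := hq_pos x
      have h5 : 1 - x * (1 - x) = x ^ 2 - x + 1 := by ring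
      rw [h5]; positivity
    · apply ContinuousOn.div continuousOn_const (by fun_prop)
      intro x _
      have := hq_pos x
      have h5 : 1 - x * (1 - x) = x ^ 2 - x + 1 := by ring
      rw [h5]; positivity
  rw [intervalIntegral.integral_eq_sub_of_hasDerivAt (fun x _ => hderiv x)
    (hcont.intervalIntegrable)]
  have e1 : F 1 = 2 / 3 + (2 * Real.sqrt 3 / 9) * (Real.pi / 6) := by
    rw [hFdef]
    norm_num
  have e0 : F 0 = -(2 / 3) + -((2 * Real.sqrt 3 / 9) * (Real.pi / 6)) := by
    rw [hFdef]
    norm_num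
    rw [show (-1 : ℝ) / Real.sqrt 3 = -(1 / Real.sqrt 3) by ring, Real.arctan_neg, arctan_sqrt3]
    ring
  rw [e1, e0]
  ring

theorem sum_inv_centralBinom :
    ∑' n : ℕ, (1 : ℝ) / (Nat.choose (2 * n) n : ℝ) =
      (2 / 27) * (18 + Real.sqrt 3 * Real.pi) := by
  rw [swap_lemma, ftc_lemma]
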